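/- arXiv:2106.00242 — 2 statements merged into one kernel-verified Lean document; each statement's English description precedes it below -/
import Mathlib

section
/- Let d, N ∈ ℕ, let φ : ℝ → ℝ be differentiable and non-decreasing with φ′(s) ≥ c₀ > 0 for all s, and let u : [0,T] × (ℤ/Nℤ)^d → ℝ be a C¹ (in time) solution of ∂_t u(t,x) = Δ^N φ(u(t,x)) − K u(t,x) v(t,x), where Δ^N is the discrete Laplacian, K ≥ 0 and v(t,x) ≥ 0. If u(t,x) ≥ 0 for all t,x, then (1/2)·(d/dt) ∑_x u(t,x)² ≤ −c₀ ∑_x |∇^N u(t,x)|², where ∇^N is the discrete gradient. -/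
open scoped BigOperators


-- pointwise inequality from φ' ≥ c₀
lemma aux_mono (φ φ' : ℝ → ℝ) (c₀ : ℝ) (hφ : ∀ s, HasDerivAt φ (φ' s) s)
    (hφ' : ∀ s, c₀ ≤ φ' s) (a b : ℝ) :
    c₀ * (a - b) ^ 2 ≤ (a - b) * (φ a - φ b) := by
  set g : ℝ → ℝ := fun s => φ s - c₀ * s with hg
  have hg' : ∀ s, HasDerivAt g (φ' s - c₀) s := fun s =>
    (hφ s).sub ((hasDerivAt_id s).const_mul c₀ |>.congr_deriv (by ring))
  have hmono : Monotone g := by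
    apply monotone_of_deriv_nonneg
    · exact fun s => (hg' s).differentiableAt
    · intro s
      rw [(hg' s).deriv]
      linarith [hφ' s]
  rcases le_total a b with h | h
  · have h2 : φ a - c₀ * a ≤ φ b - c₀ * b := hmono h
    nlinarith [h2]
  · have h2 : φ b - c₀ * b ≤ φ a - c₀ * a := hmono h
    nlinarith [h2]

-- shift invariance of sums over the torus
lemma aux_shift {d N : ℕ} [NeZero N] (f : (Fin d → ZMod N) → ℝ) (e : Fin d → ZMod N) :
    ∑ x : Fin d → ZMod N, f (x + e) = ∑ x : Fin d → ZMod N, f x :=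
  Fintype.sum_equiv (Equiv.addRight e) _ _ (fun x => rfl)


-- discrete summation by parts on the torus
lemma aux_sbp {d N : ℕ} [NeZero N] (u w : (Fin d → ZMod N) → ℝ) (e : Fin d → ZMod N) :
    ∑ x : Fin d → ZMod N, u x * (w (x + e) + w (x - e) - 2 * w x)
      = -∑ x : Fin d → ZMod N, (u (x + e) - u x) * (w (x + e) - w x) := by
  have s1 : ∑ x : Fin d → ZMod N, u x * w (x - e)
      = ∑ x : Fin d → ZMod N, u (x + e) * w x := by
    rw [← aux_shift (fun x => u x * w (x - e)) e]
    simp [add_sub_cancel_right]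
  have s2 : ∑ x : Fin d → ZMod N, u (x + e) * w (x + e)
      = ∑ x : Fin d → ZMod N, u x * w x :=
    aux_shift (fun x => u x * w x) e
  rw [eq_neg_iff_add_eq_zero, ← Finset.sum_add_distrib]
  have key : ∀ x : Fin d → ZMod N,
      u x * (w (x + e) + w (x - e) - 2 * w x)
        + (u (x + e) - u x) * (w (x + e) - w x)
      = (u x * w (x - e) - u (x + e) * w x)
        + (u (x + e) * w (x + e) - u x * w x) := fun x => by ring
  rw [Finset.sum_congr rfl fun x _ => key x, Finset.sum_add_distrib,
    Finset.sum_sub_distrib, Finset.sum_sub_distrib, s1, s2]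
  ring

/-- Energy dissipation for the semi-discrete reaction-diffusion equation: if
`∂_t u = Δ^N φ(u) − K u v` with `φ' ≥ c₀ > 0`, `K ≥ 0`, `u, v ≥ 0`, then
`(1/2) d/dt ∑_x u(t,x)² ≤ −c₀ ∑_x |∇^N u(t,x)|²`. -/
theorem stmt6 (d N : ℕ) [NeZero N] (T : ℝ) (φ φ' : ℝ → ℝ) (c₀ K : ℝ)
    (hc₀ : 0 < c₀) (hK : 0 ≤ K)
    (hφ : ∀ s, HasDerivAt φ (φ' s) s) (hφ' : ∀ s, c₀ ≤ φ' s)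
    (u v : ℝ → (Fin d → ZMod N) → ℝ)
    (hu0 : ∀ t x, 0 ≤ u t x) (hv0 : ∀ t x, 0 ≤ v t x)
    (hu : ∀ t x, HasDerivAt (fun s => u s x)
      ((N : ℝ) ^ 2 * ∑ j : Fin d,
          (φ (u t (x + Pi.single j 1)) + φ (u t (x - Pi.single j 1)) - 2 * φ (u t x))
        - K * u t x * v t x) t)
    (t : ℝ) (ht : t ∈ Set.Icc 0 T) (y : ℝ)
    (hy : HasDerivAt (fun s => (1 / 2 : ℝ) * ∑ x : Fin d → ZMod N, (u s x) ^ 2) y t) :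
    y ≤ -c₀ * ∑ x : Fin d → ZMod N, ∑ j : Fin d,
        ((N : ℝ) * (u t (x + Pi.single j 1) - u t x)) ^ 2 := by
  classical
  set D : (Fin d → ZMod N) → ℝ := fun x =>
    (N : ℝ) ^ 2 * ∑ j : Fin d,
        (φ (u t (x + Pi.single j 1)) + φ (u t (x - Pi.single j 1)) - 2 * φ (u t x))
      - K * u t x * v t x with hDdef
  have hsum : HasDerivAt (fun s => ∑ x : Fin d → ZMod N, (u s x) ^ 2)
      (∑ x : Fin d → ZMod N, ((2 : ℕ) * u t x ^ 1 * D x)) t :=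
    HasDerivAt.fun_sum fun x _ => (hu t x).pow 2
  have hD : HasDerivAt (fun s => (1 / 2 : ℝ) * ∑ x : Fin d → ZMod N, (u s x) ^ 2)
      ((1 / 2 : ℝ) * ∑ x : Fin d → ZMod N, ((2 : ℕ) * u t x ^ 1 * D x)) t :=
    hsum.const_mul _
  have hyeq : y = ∑ x : Fin d → ZMod N, u t x * D x := by
    rw [hy.unique hD, Finset.mul_sum]
    exact Finset.sum_congr rfl fun x _ => by push_cast; ring
  rw [hyeq]
  -- drop the nonnegative reaction term
  have step1 : ∑ x : Fin d → ZMod N, u t x * D x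
      ≤ ∑ x : Fin d → ZMod N, (N : ℝ) ^ 2 * (u t x *
          ∑ j : Fin d, (φ (u t (x + Pi.single j 1)) + φ (u t (x - Pi.single j 1))
            - 2 * φ (u t x))) := by
    refine Finset.sum_le_sum fun x _ => ?_
    have h0 : 0 ≤ K * (u t x * u t x) * v t x :=
      mul_nonneg (mul_nonneg hK (mul_nonneg (hu0 t x) (hu0 t x))) (hv0 t x)
    simp only [hDdef]
    nlinarith [h0]
  refine step1.trans ?_
  -- summation by parts and the monotonicity inequality, per direction j
  have step2 : ∑ x : Fin d → ZMod N, (N : ℝ) ^ 2 * (u t x *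
        ∑ j : Fin d, (φ (u t (x + Pi.single j 1)) + φ (u t (x - Pi.single j 1))
          - 2 * φ (u t x)))
      = (N : ℝ) ^ 2 * ∑ j : Fin d, ∑ x : Fin d → ZMod N,
          u t x * (φ (u t (x + Pi.single j 1)) + φ (u t (x - Pi.single j 1))
            - 2 * φ (u t x)) := by
    rw [← Finset.mul_sum, Finset.sum_comm]
    congr 1
    exact Finset.sum_congr rfl fun x _ => by rw [Finset.mul_sum]
  rw [step2]
  have step3 : ∀ j : Fin d, ∑ x : Fin d → ZMod N,
        u t x * (φ (u t (x + Pi.single j 1)) + φ (u t (x - Pi.single j 1))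
          - 2 * φ (u t x))
      ≤ -c₀ * ∑ x : Fin d → ZMod N, (u t (x + Pi.single j 1) - u t x) ^ 2 := by
    intro j
    rw [aux_sbp (fun x => u t x) (fun x => φ (u t x)) (Pi.single j 1),
      neg_mul, neg_le_neg_iff, Finset.mul_sum]
    exact Finset.sum_le_sum fun x _ =>
      aux_mono φ φ' c₀ hφ hφ' (u t (x + Pi.single j 1)) (u t x)
  have step4 : (N : ℝ) ^ 2 * ∑ j : Fin d, ∑ x : Fin d → ZMod N,
        u t x * (φ (u t (x + Pi.single j 1)) + φ (u t (x - Pi.single j 1))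
          - 2 * φ (u t x))
      ≤ (N : ℝ) ^ 2 * ∑ j : Fin d,
          (-c₀ * ∑ x : Fin d → ZMod N, (u t (x + Pi.single j 1) - u t x) ^ 2) :=
    mul_le_mul_of_nonneg_left (Finset.sum_le_sum fun j _ => step3 j) (by positivity)
  refine step4.trans (le_of_eq ?_)
  rw [Finset.sum_comm]
  simp only [mul_pow, ← Finset.mul_sum]
  ring
end

section
/- Let S = (ℤ/Nℤ)^d and suppose u₊, u : [0,T] × S → ℝ are C¹ in time, φ : ℝ → ℝ is differentiable and non-decreasing, f(t,x,·) : ℝ^S → ℝ is C¹ with uniformly bounded difference quotients along the trajectories, u satisfies ∂_t u(t,x) = Δ^N φ(u(t,x)) + f(t,x,u(t)), u₊ satisfies ∂_t u₊(t,x) ≥ Δ^N φ(u₊(t,x)) + f(t,x,u₊(t)), and u₊(0,x) ≥ u(0,x) for all x. Then u₊(t,x) ≥ u(t,x) for all t ∈ [0,T] and x ∈ S. -/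
open scoped BigOperators

/-- Comparison principle for the semi-discrete equation `∂_t u = Δ^N φ(u) + f(t,x,u)` on
the discrete torus: a super-solution `up` that dominates a solution `u` at time `0`
dominates it on all of `[0,T]`, provided `φ` is differentiable and non-decreasing and the
difference quotients of `f` along the two trajectories are uniformly bounded. -/
theorem stmt16 (d N : ℕ) [NeZero N] (T : ℝ) (hT : 0 ≤ T)
    (φ φ' : ℝ → ℝ) (hφd : ∀ s, HasDerivAt φ (φ' s) s) (hφm : Monotone φ)
    (f : ℝ → (Fin d → ZMod N) → ((Fin d → ZMod N) → ℝ) → ℝ)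
    (u up : ℝ → (Fin d → ZMod N) → ℝ) (dup : ℝ → (Fin d → ZMod N) → ℝ)
    (M : ℝ)
    (hM : ∀ t ∈ Set.Icc (0 : ℝ) T, ∀ x,
      |f t x (up t) - f t x (u t)| ≤ M * |up t x - u t x|)
    (hu : ∀ t ∈ Set.Icc (0 : ℝ) T, ∀ x, HasDerivWithinAt (fun s => u s x)
      ((N : ℝ) ^ 2 * ∑ j : Fin d,
          (φ (u t (x + Pi.single j 1)) + φ (u t (x - Pi.single j 1)) - 2 * φ (u t x))
        + f t x (u t)) (Set.Icc 0 T) t)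
    (hup : ∀ t ∈ Set.Icc (0 : ℝ) T, ∀ x,
      HasDerivWithinAt (fun s => up s x) (dup t x) (Set.Icc 0 T) t)
    (hsup : ∀ t ∈ Set.Icc (0 : ℝ) T, ∀ x,
      (N : ℝ) ^ 2 * ∑ j : Fin d,
          (φ (up t (x + Pi.single j 1)) + φ (up t (x - Pi.single j 1)) - 2 * φ (up t x))
        + f t x (up t) ≤ dup t x)
    (hinit : ∀ x, u 0 x ≤ up 0 x) :
    ∀ t ∈ Set.Icc (0 : ℝ) T, ∀ x, u t x ≤ up t x := by
  classical
  set K : ℝ := max M 0 with hKdef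
  have hK0 : (0 : ℝ) ≤ K := le_max_right _ _
  have hMK : M ≤ K := le_max_left _ _
  -- difference, positive part of φ-difference, total positive mass
  set h : ℝ → (Fin d → ZMod N) → ℝ := fun t x => u t x - up t x with hhdef
  set p : ℝ → (Fin d → ZMod N) → ℝ := fun t x => max (φ (u t x) - φ (up t x)) 0 with hpdef
  set F : ℝ → ℝ := fun t => ∑ x : Fin d → ZMod N, max (h t x) 0 with hFdef
  set Lu : ℝ → (Fin d → ZMod N) → ℝ := fun t x =>
    (N : ℝ) ^ 2 * ∑ j : Fin d,
        (φ (u t (x + Pi.single j 1)) + φ (u t (x - Pi.single j 1)) - 2 * φ (u t x))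
      + f t x (u t) with hLudef
  set Lp : ℝ → (Fin d → ZMod N) → ℝ := fun t x =>
    (N : ℝ) ^ 2 * ∑ j : Fin d,
        (p t (x + Pi.single j 1) + p t (x - Pi.single j 1) - 2 * p t x) with hLpdef
  set D : ℝ → (Fin d → ZMod N) → ℝ := fun t y =>
    if 0 < h t y then Lu t y - dup t y
    else if h t y = 0 then max (Lu t y - dup t y) 0 else 0 with hDdef
  have hN2 : (0 : ℝ) ≤ (N : ℝ) ^ 2 := sq_nonneg _
  have hpnn : ∀ t x, 0 ≤ p t x := fun t x => le_max_right _ _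
  have hglep : ∀ t x, φ (u t x) - φ (up t x) ≤ p t x := fun t x => le_max_left _ _
  -- the discrete Laplacian of p sums to zero over the torus
  have hsumLp : ∀ t, ∑ x : Fin d → ZMod N, Lp t x = 0 := by
    intro t
    have hshift : ∀ (q : (Fin d → ZMod N) → ℝ) (v : Fin d → ZMod N),
        ∑ x : Fin d → ZMod N, q (x + v) = ∑ x : Fin d → ZMod N, q x :=
      fun q v => Equiv.sum_comp (Equiv.addRight v) q
    have hshift' : ∀ (q : (Fin d → ZMod N) → ℝ) (v : Fin d → ZMod N),
        ∑ x : Fin d → ZMod N, q (x - v) = ∑ x : Fin d → ZMod N, q x :=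
      fun q v => Equiv.sum_comp (Equiv.subRight v) q
    simp only [hLpdef]
    rw [← Finset.mul_sum, Finset.sum_comm]
    have hzero : ∀ j : Fin d,
        (∑ x : Fin d → ZMod N,
          (p t (x + Pi.single j 1) + p t (x - Pi.single j 1) - 2 * p t x)) = 0 := by
      intro j
      rw [Finset.sum_sub_distrib, Finset.sum_add_distrib, hshift, hshift', ← Finset.mul_sum]
      ring
    rw [Finset.sum_congr rfl fun j _ => hzero j]
    simp
  -- continuity of F on [0,T]
  have hcu : ∀ x, ContinuousOn (fun s => u s x) (Set.Icc 0 T) :=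
    fun x t ht => (hu t ht x).continuousWithinAt
  have hcup : ∀ x, ContinuousOn (fun s => up s x) (Set.Icc 0 T) :=
    fun x t ht => (hup t ht x).continuousWithinAt
  have hch : ∀ x, ContinuousOn (fun s => h s x) (Set.Icc 0 T) :=
    fun x => (hcu x).sub (hcup x)
  have hcF : ContinuousOn F (Set.Icc 0 T) := by
    apply continuousOn_finset_sum
    intro x _
    exact (hch x).sup continuousOn_const
  -- pointwise bound on D
  have hDle : ∀ t ∈ Set.Icc (0 : ℝ) T, ∀ y,
      D t y ≤ Lp t y + K * max (h t y) 0 := by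
    intro t ht y
    -- the key differential inequality at site y
    have hkey : Lu t y - dup t y ≤
        (N : ℝ) ^ 2 * ∑ j : Fin d,
            ((φ (u t (y + Pi.single j 1)) - φ (up t (y + Pi.single j 1)))
              + (φ (u t (y - Pi.single j 1)) - φ (up t (y - Pi.single j 1)))
              - 2 * (φ (u t y) - φ (up t y)))
          + (f t y (u t) - f t y (up t)) := by
      have h1 := hsup t ht y
      have h2 : (N : ℝ) ^ 2 * ∑ j : Fin d,
            (φ (u t (y + Pi.single j 1)) + φ (u t (y - Pi.single j 1)) - 2 * φ (u t y))
          - (N : ℝ) ^ 2 * ∑ j : Fin d,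
            (φ (up t (y + Pi.single j 1)) + φ (up t (y - Pi.single j 1)) - 2 * φ (up t y))
          = (N : ℝ) ^ 2 * ∑ j : Fin d,
            ((φ (u t (y + Pi.single j 1)) - φ (up t (y + Pi.single j 1)))
              + (φ (u t (y - Pi.single j 1)) - φ (up t (y - Pi.single j 1)))
              - 2 * (φ (u t y) - φ (up t y))) := by
        rw [← mul_sub, ← Finset.sum_sub_distrib]
        congr 1
        refine Finset.sum_congr rfl fun j _ => by ring
      simp only [hLudef]
      linarith
    have hfd : f t y (u t) - f t y (up t) ≤ K * |h t y| := by
      have h1 := hM t ht y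
      have h3 : |up t y - u t y| = |h t y| := by
        simp only [hhdef]
        exact abs_sub_comm _ _
      calc f t y (u t) - f t y (up t) ≤ |f t y (u t) - f t y (up t)| := le_abs_self _
        _ = |f t y (up t) - f t y (u t)| := abs_sub_comm _ _
        _ ≤ M * |up t y - u t y| := h1
        _ = M * |h t y| := by rw [h3]
        _ ≤ K * |h t y| := mul_le_mul_of_nonneg_right hMK (abs_nonneg _)
    -- comparing the φ-Laplacian difference with Lp when g y = p y
    have hDgDp : φ (u t y) - φ (up t y) = p t y →
        (N : ℝ) ^ 2 * ∑ j : Fin d,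
            ((φ (u t (y + Pi.single j 1)) - φ (up t (y + Pi.single j 1)))
              + (φ (u t (y - Pi.single j 1)) - φ (up t (y - Pi.single j 1)))
              - 2 * (φ (u t y) - φ (up t y))) ≤ Lp t y := by
      intro hg
      simp only [hLpdef]
      refine mul_le_mul_of_nonneg_left (Finset.sum_le_sum fun j _ => ?_) hN2
      have h1 := hglep t (y + Pi.single j 1)
      have h2 := hglep t (y - Pi.single j 1)
      rw [hg]
      linarith
    rcases lt_trichotomy (h t y) 0 with hneg | hzero | hpos
    · -- u < up at y : D = 0, p t y = 0, Lp ≥ 0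
      have hD0 : D t y = 0 := by
        simp only [hDdef]
        rw [if_neg (by linarith), if_neg hneg.ne]
      have huy : u t y ≤ up t y := by
        have : u t y - up t y < 0 := hneg
        linarith
      have hpy : p t y = 0 := max_eq_right (by linarith [hφm huy])
      have hLp0 : 0 ≤ Lp t y := by
        simp only [hLpdef]
        refine mul_nonneg hN2 (Finset.sum_nonneg fun j _ => ?_)
        rw [hpy]
        have := hpnn t (y + Pi.single j 1)
        have := hpnn t (y - Pi.single j 1)
        linarith
      have : 0 ≤ K * max (h t y) 0 := mul_nonneg hK0 (le_max_right _ _)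
      linarith
    · -- u = up at y
      have huy : u t y = up t y := by
        have : u t y - up t y = 0 := hzero
        linarith
      have hgy : φ (u t y) - φ (up t y) = p t y := by
        rw [huy, sub_self]
        simp [hpdef, huy]
      have hfd0 : f t y (u t) - f t y (up t) ≤ 0 := by
        have : |h t y| = 0 := by rw [hzero, abs_zero]
        calc f t y (u t) - f t y (up t) ≤ K * |h t y| := hfd
          _ = 0 := by rw [this, mul_zero]
      have hD0 : D t y = max (Lu t y - dup t y) 0 := by
        simp only [hDdef]
        rw [if_neg (by rw [hzero]; exact lt_irrefl 0), if_pos hzero]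
      have hLp0 : 0 ≤ Lp t y := by
        have hpy : p t y = 0 := by rw [← hgy, huy, sub_self]
        simp only [hLpdef]
        refine mul_nonneg hN2 (Finset.sum_nonneg fun j _ => ?_)
        rw [hpy]
        have := hpnn t (y + Pi.single j 1)
        have := hpnn t (y - Pi.single j 1)
        linarith
      have hle : Lu t y - dup t y ≤ Lp t y := le_trans hkey (by
        have := hDgDp hgy
        linarith)
      have : 0 ≤ K * max (h t y) 0 := mul_nonneg hK0 (le_max_right _ _)
      rw [hD0]
      have := max_le hle hLp0
      linarith
    · -- u > up at y
      have huy : up t y ≤ u t y := by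
        have : 0 < u t y - up t y := hpos
        linarith
      have hgy : φ (u t y) - φ (up t y) = p t y :=
        (max_eq_left (by linarith [hφm huy])).symm
      have hD0 : D t y = Lu t y - dup t y := by
        simp only [hDdef]
        rw [if_pos hpos]
      have habs : |h t y| = max (h t y) 0 := by
        rw [abs_of_pos hpos, max_eq_left hpos.le]
      rw [hD0]
      have h1 := hDgDp hgy
      have h2 : f t y (u t) - f t y (up t) ≤ K * max (h t y) 0 := by
        rw [← habs]; exact hfd
      linarith
  -- sum of D bounded by K * F
  have hsumD : ∀ t ∈ Set.Icc (0 : ℝ) T, (∑ y : Fin d → ZMod N, D t y) ≤ K * F t := by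
    intro t ht
    calc (∑ y : Fin d → ZMod N, D t y)
        ≤ ∑ y : Fin d → ZMod N, (Lp t y + K * max (h t y) 0) :=
          Finset.sum_le_sum fun y _ => hDle t ht y
      _ = (∑ y : Fin d → ZMod N, Lp t y) + K * ∑ y : Fin d → ZMod N, max (h t y) 0 := by
          rw [Finset.sum_add_distrib, Finset.mul_sum]
      _ = K * F t := by rw [hsumLp t]; simp [hFdef]
  -- the Dini-derivative estimate needed for Grönwall
  have hdini : ∀ t ∈ Set.Ico (0 : ℝ) T, ∀ r, K * F t < r →
      ∃ᶠ z in nhdsWithin t (Set.Ioi t), (z - t)⁻¹ * (F z - F t) < r := by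
    intro t ht r hr
    have htT : t < T := ht.2
    have htI : t ∈ Set.Icc (0 : ℝ) T := ⟨ht.1, htT.le⟩
    set n : ℕ := Fintype.card (Fin d → ZMod N) with hndef
    set c : ℝ := (r - ∑ y : Fin d → ZMod N, D t y) / (n + 1) with hcdef
    have hDr : (∑ y : Fin d → ZMod N, D t y) < r := lt_of_le_of_lt (hsumD t htI) hr
    have hcpos : 0 < c := div_pos (by linarith) (by positivity)
    have hLc : ((n : ℝ) + 1) * c = r - ∑ y : Fin d → ZMod N, D t y := by
      rw [hcdef]
      field_simp
    set L : Filter ℝ := nhdsWithin t (Set.Ioc t T) with hLdef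
    have hLIoi : L = nhdsWithin t (Set.Ioi t) := nhdsWithin_Ioc_eq_nhdsGT htT
    have hLle : L ≤ nhdsWithin t (Set.Icc 0 T \ {t}) := by
      apply nhdsWithin_mono
      intro z hz
      exact ⟨⟨le_trans ht.1 hz.1.le, hz.2⟩, fun hzs => (ne_of_gt hz.1) (Set.mem_singleton_iff.mp hzs)⟩
    have hLle' : L ≤ nhdsWithin t (Set.Icc 0 T) := by
      apply nhdsWithin_mono
      intro z hz
      exact ⟨le_trans ht.1 hz.1.le, hz.2⟩
    have hev_mem : ∀ᶠ z in L, z ∈ Set.Ioc t T := eventually_mem_nhdsWithin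
    -- slope convergence per site
    have hslope : ∀ y, Filter.Tendsto (fun z => (z - t)⁻¹ * (h z y - h t y)) L
        (nhds (Lu t y - dup t y)) := by
      intro y
      have hder : HasDerivWithinAt (fun s => h s y) (Lu t y - dup t y) (Set.Icc 0 T) t := by
        exact (hu t htI y).sub (hup t htI y)
      have h1 := hasDerivWithinAt_iff_tendsto_slope.mp hder
      have h2 : (fun z => (z - t)⁻¹ * (h z y - h t y)) = slope (fun s => h s y) t := by
        funext z
        rw [slope_def_field, div_eq_inv_mul]
      rw [h2]
      exact h1.mono_left hLle
    have hcont : ∀ y, Filter.Tendsto (fun z => h z y) L (nhds (h t y)) :=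
      fun y => ((hch y) t htI).tendsto.mono_left hLle'
    -- per-site eventual bound
    have hsite : ∀ y, ∀ᶠ z in L,
        (z - t)⁻¹ * (max (h z y) 0 - max (h t y) 0) < D t y + c := by
      intro y
      rcases lt_trichotomy (h t y) 0 with hneg | hzero | hpos
      · have hev : ∀ᶠ z in L, h z y < 0 := (hcont y).eventually_lt_const hneg
        filter_upwards [hev] with z hz
        have hD0 : D t y = 0 := by
          simp only [hDdef]
          rw [if_neg (by linarith), if_neg hneg.ne]
        rw [hD0, max_eq_right hz.le, max_eq_right hneg.le, sub_zero, mul_zero]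
        linarith
      · have hev : ∀ᶠ z in L, (z - t)⁻¹ * (h z y - h t y) < (Lu t y - dup t y) + c :=
          (hslope y).eventually_lt_const (by linarith)
        filter_upwards [hev, hev_mem] with z hz hzm
        have hzt : 0 < z - t := sub_pos.mpr hzm.1
        have hD0 : D t y = max (Lu t y - dup t y) 0 := by
          simp only [hDdef]
          rw [if_neg (by rw [hzero]; exact lt_irrefl 0), if_pos hzero]
        rw [hD0, max_eq_right hzero.le, sub_zero]
        rcases le_or_gt (h z y) 0 with hle | hlt
        · rw [max_eq_right hle, mul_zero]
          have : 0 ≤ max (Lu t y - dup t y) 0 := le_max_right _ _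
          linarith
        · rw [max_eq_left hlt.le]
          have h1 : (z - t)⁻¹ * (h z y - h t y) = (z - t)⁻¹ * h z y := by
            rw [hzero, sub_zero]
          have h2 : (z - t)⁻¹ * h z y < (Lu t y - dup t y) + c := by rw [← h1]; exact hz
          exact h2.trans_le (add_le_add_left (le_max_left _ _) c)
      · have hev1 : ∀ᶠ z in L, 0 < h z y := (hcont y).eventually_const_lt hpos
        have hev : ∀ᶠ z in L, (z - t)⁻¹ * (h z y - h t y) < (Lu t y - dup t y) + c :=
          (hslope y).eventually_lt_const (by linarith)
        filter_upwards [hev1, hev] with z hz1 hz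
        have hD0 : D t y = Lu t y - dup t y := by
          simp only [hDdef]
          rw [if_pos hpos]
        rw [hD0, max_eq_left hz1.le, max_eq_left hpos.le]
        exact hz
    have hall : ∀ᶠ z in L, (z - t)⁻¹ * (F z - F t) < r := by
      filter_upwards [Filter.eventually_all.mpr hsite, hev_mem] with z hz hzm
      have heq : (z - t)⁻¹ * (F z - F t)
          = ∑ y : Fin d → ZMod N, (z - t)⁻¹ * (max (h z y) 0 - max (h t y) 0) := by
        simp only [hFdef]
        rw [← Finset.sum_sub_distrib, Finset.mul_sum]
      rw [heq]
      have hne : (Finset.univ : Finset (Fin d → ZMod N)).Nonempty := Finset.univ_nonempty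
      calc (∑ y : Fin d → ZMod N, (z - t)⁻¹ * (max (h z y) 0 - max (h t y) 0))
          < ∑ y : Fin d → ZMod N, (D t y + c) :=
            Finset.sum_lt_sum_of_nonempty hne fun y _ => hz y
        _ = (∑ y : Fin d → ZMod N, D t y) + n * c := by
            rw [Finset.sum_add_distrib, Finset.sum_const, Finset.card_univ, nsmul_eq_mul, hndef]
        _ ≤ r := by
            have : (n : ℝ) * c ≤ ((n : ℝ) + 1) * c := by nlinarith
            linarith
    rw [← hLIoi]
    have : (L).NeBot := by
      rw [hLIoi]
      exact nhdsGT_neBot t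
    exact hall.frequently
  -- Grönwall
  have hmain : ∀ t ∈ Set.Icc (0 : ℝ) T, F t ≤ 0 := by
    intro t ht
    have hF0 : F 0 ≤ 0 := by
      apply le_of_eq
      apply Finset.sum_eq_zero
      intro x _
      exact max_eq_right (by simp only [hhdef]; linarith [hinit x])
    have := le_gronwallBound_of_liminf_deriv_right_le (f := F) (f' := fun s => K * F s)
      (δ := 0) (K := K) (ε := 0) (a := 0) (b := T) hcF hdini hF0
      (fun x _ => by simp) t ht
    simpa [gronwallBound_ε0_δ0] using this
  intro t ht x
  have h1 : 0 ≤ F t := Finset.sum_nonneg fun y _ => le_max_right _ _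
  have h3 : F t = 0 := le_antisymm (hmain t ht) h1
  have h4 : max (h t x) 0 = 0 := by
    have := (Finset.sum_eq_zero_iff_of_nonneg
      (fun y _ => le_max_right (h t y) 0)).mp h3 x (Finset.mem_univ x)
    exact this
  have h5 : h t x ≤ 0 := by
    have := le_max_left (h t x) 0
    rw [h4] at this
    exact this
  have : u t x - up t x ≤ 0 := h5
  linarith
end
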